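/- Let P₁,…,P_q be orthogonal projection matrices in ℝ^{d×d} onto subspaces 𝒫₁,…,𝒫_q. If ⋂_{k=1}^q 𝒫_k = {0}, then the operator 2-norm of the product P_q ⋯ P₂ P₁ is strictly less than 1. -/

import Mathlib

open Matrix

/-- The operator 2-norm of a real `d × d` matrix (the norm induced by the
Euclidean norm). -/
noncomputable def opNorm2 {d : ℕ} (M : Matrix (Fin d) (Fin d) ℝ) : ℝ :=
  ‖Matrix.toEuclideanCLM (𝕜 := ℝ) M‖

/-- The ordered product `P_k ⋯ P₂ P₁` of the first `k` matrices of the sequence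
`P₁, P₂, …`. -/
def prodSeq {d : ℕ} (P : ℕ → Matrix (Fin d) (Fin d) ℝ) : ℕ → Matrix (Fin d) (Fin d) ℝ
  | 0 => 1
  | k + 1 => P (k + 1) * prodSeq P k

lemma proj_aux {d : ℕ} (M : Matrix (Fin d) (Fin d) ℝ) (hs : Mᵀ = M) (hi : M * M = M)
    (x : EuclideanSpace ℝ (Fin d)) :
    ‖toEuclideanCLM (𝕜 := ℝ) M x‖ ≤ ‖x‖ ∧
      (‖toEuclideanCLM (𝕜 := ℝ) M x‖ = ‖x‖ → toEuclideanCLM (𝕜 := ℝ) M x = x) := by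
  set T := toEuclideanCLM (𝕜 := ℝ) M with hT
  have hMstar : star M = M := by
    rw [Matrix.star_eq_conjTranspose]
    ext i j
    simpa [Matrix.conjTranspose_apply] using congrFun (congrFun hs i) j
  have hstar : star T = T := by rw [hT, ← map_star, hMstar]
  have hadj : ContinuousLinearMap.adjoint T = T := by
    rw [← ContinuousLinearMap.star_eq_adjoint, hstar]
  have hmul : T * T = T := by rw [hT, ← _root_.map_mul, hi]
  have hTT : T (T x) = T x := by
    rw [← ContinuousLinearMap.mul_apply, hmul]
  have h1 : ∀ u v : EuclideanSpace ℝ (Fin d), inner ℝ (T u) v = inner ℝ u (T v) := by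
    intro u v
    conv_lhs => rw [← hadj]
    exact ContinuousLinearMap.adjoint_inner_left T v u
  have hinner : inner ℝ x (T x) = ‖T x‖ ^ 2 := by
    have h2 := h1 x (T x)
    rw [hTT] at h2
    rw [← h2, real_inner_self_eq_norm_sq]
  have hsub : ‖x - T x‖ ^ 2 = ‖x‖ ^ 2 - ‖T x‖ ^ 2 := by
    rw [norm_sub_sq_real, hinner]; ring
  constructor
  · nlinarith [sq_nonneg ‖x - T x‖, norm_nonneg x, norm_nonneg (T x)]
  · intro h
    have : ‖x - T x‖ ^ 2 = 0 := by rw [hsub, h]; ring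
    have : x - T x = 0 := by
      have := pow_eq_zero_iff (n := 2) (by norm_num) |>.mp this
      exact norm_eq_zero.mp this
    have := sub_eq_zero.mp this
    exact this.symm

/-- Let `P₁, …, P_q` be orthogonal projection matrices in
`ℝ^{d×d}` (symmetric idempotents) onto subspaces `𝒫₁, …, 𝒫_q` (their fixed-point
sets). If `⋂_{k=1}^q 𝒫_k = {0}`, then the operator 2-norm of the product
`P_q ⋯ P₂ P₁` is strictly less than 1. -/
theorem projection_product_contraction {d q : ℕ} (hq : 1 ≤ q)
    (P : ℕ → Matrix (Fin d) (Fin d) ℝ)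
    (hsymm : ∀ k, 1 ≤ k → k ≤ q → (P k)ᵀ = P k)
    (hidem : ∀ k, 1 ≤ k → k ≤ q → P k * P k = P k)
    (hinter : (⋂ k ∈ Finset.Icc 1 q, {x : Fin d → ℝ | P k *ᵥ x = x}) = {0}) :
    opNorm2 (prodSeq P q) < 1 := by
  classical
  set E := EuclideanSpace ℝ (Fin d)
  set Tq := toEuclideanCLM (𝕜 := ℝ) (prodSeq P q) with hTq
  rcases Nat.eq_zero_or_pos d with hd | hd
  · subst hd
    have : Tq = 0 := by
      ext x i
      exact absurd i.2 (by omega)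
    have : opNorm2 (prodSeq P q) = 0 := by
      rw [opNorm2, ← hTq, this, norm_zero]
    rw [this]; norm_num
  -- d ≥ 1 : unit sphere nonempty and compact
  have hx₀ : ∃ x₀ : E, ‖x₀‖ = 1 := by
    refine ⟨EuclideanSpace.single ⟨0, hd⟩ (1 : ℝ), ?_⟩
    rw [EuclideanSpace.norm_single]; norm_num
  obtain ⟨x₀, hx₀⟩ := hx₀
  have hsph : x₀ ∈ Metric.sphere (0 : E) 1 := by
    simpa [mem_sphere_zero_iff_norm] using hx₀
  obtain ⟨x, hxs, hmax⟩ := (isCompact_sphere (0 : E) 1).exists_isMaxOn ⟨x₀, hsph⟩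
    ((Tq.continuous.norm).continuousOn)
  have hx1 : ‖x‖ = 1 := mem_sphere_zero_iff_norm.mp hxs
  -- operator norm bounded by value at x
  have hbound : opNorm2 (prodSeq P q) ≤ ‖Tq x‖ := by
    rw [opNorm2, ← hTq]
    refine Tq.opNorm_le_bound (norm_nonneg _) fun y => ?_
    rcases eq_or_ne y 0 with rfl | hy
    · simp
    · have hny : (0:ℝ) < ‖y‖ := norm_pos_iff.mpr hy
      have hu : (‖y‖⁻¹ • y) ∈ Metric.sphere (0 : E) 1 := by
        simp [mem_sphere_zero_iff_norm, norm_smul, abs_of_pos hny, inv_mul_cancel₀ hny.ne']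
      have := hmax hu
      simp only [Set.mem_setOf_eq, _root_.map_smul, norm_smul, norm_inv, norm_norm] at this
      calc ‖Tq y‖ = ‖y‖ * (‖y‖⁻¹ * ‖Tq y‖) := by field_simp
        _ ≤ ‖y‖ * ‖Tq x‖ := by
            exact mul_le_mul_of_nonneg_left this (norm_nonneg y)
        _ = ‖Tq x‖ * ‖y‖ := mul_comm _ _
  refine lt_of_le_of_lt hbound ?_
  -- show ‖Tq x‖ < 1
  by_contra hcon
  push_neg at hcon
  set y : ℕ → E := fun k => toEuclideanCLM (𝕜 := ℝ) (prodSeq P k) x with hy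
  have hy0 : y 0 = x := by
    show toEuclideanCLM (𝕜 := ℝ) (1 : Matrix (Fin d) (Fin d) ℝ) x = x
    rw [_root_.map_one]; rfl
  have hstep : ∀ k, y (k + 1) = toEuclideanCLM (𝕜 := ℝ) (P (k + 1)) (y k) := by
    intro k
    show toEuclideanCLM (𝕜 := ℝ) (P (k + 1) * prodSeq P k) x = _
    rw [_root_.map_mul]; rfl
  have hle : ∀ k < q, ‖y (k + 1)‖ ≤ ‖y k‖ := by
    intro k hk
    rw [hstep]
    exact (proj_aux _ (hsymm (k+1) (by omega) (by omega)) (hidem (k+1) (by omega) (by omega))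
      (y k)).1
  have hmono : ∀ k j, k ≤ j → j ≤ q → ‖y j‖ ≤ ‖y k‖ := by
    intro k j hkj hjq
    induction j, hkj using Nat.le_induction with
    | base => exact le_rfl
    | succ j hj ih => exact le_trans (hle j (by omega)) (ih (by omega))
  have hyq : (1:ℝ) ≤ ‖y q‖ := hcon
  have hnorm1 : ∀ k ≤ q, ‖y k‖ = 1 := by
    intro k hk
    have h1 : ‖y k‖ ≤ 1 := by
      have := hmono 0 k (Nat.zero_le _) hk
      rwa [hy0, hx1] at this
    have h2 : (1:ℝ) ≤ ‖y k‖ := le_trans hyq (hmono k q hk le_rfl)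
    linarith
  have hfix : ∀ k ≤ q, y k = x := by
    intro k hk
    induction k with
    | zero => exact hy0
    | succ k ih =>
      have hyk : y k = x := ih (by omega)
      have heq : ‖toEuclideanCLM (𝕜 := ℝ) (P (k+1)) (y k)‖ = ‖y k‖ := by
        rw [← hstep, hnorm1 (k+1) hk, hnorm1 k (by omega)]
      have := (proj_aux _ (hsymm (k+1) (by omega) (by omega))
        (hidem (k+1) (by omega) (by omega)) (y k)).2 heq
      rw [hstep, this, hyk]
  -- each P k fixes x
  have hPfix : ∀ k, 1 ≤ k → k ≤ q → P k *ᵥ (WithLp.equiv 2 (Fin d → ℝ) x) =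
      WithLp.equiv 2 (Fin d → ℝ) x := by
    intro k h1 h2
    obtain ⟨j, rfl⟩ : ∃ j, k = j + 1 := ⟨k - 1, by omega⟩
    have h1' : toEuclideanCLM (𝕜 := ℝ) (P (j+1)) x = x := by
      have := hstep j
      rw [hfix (j+1) h2, hfix j (by omega)] at this
      exact this.symm
    have := congrArg (WithLp.equiv 2 (Fin d → ℝ)) h1'
    exact this
  have hv : (WithLp.equiv 2 (Fin d → ℝ) x) ∈
      (⋂ k ∈ Finset.Icc 1 q, {x : Fin d → ℝ | P k *ᵥ x = x}) := by
    refine Set.mem_iInter₂.mpr fun k hk => ?_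
    rw [Finset.mem_Icc] at hk
    exact hPfix k hk.1 hk.2
  rw [hinter] at hv
  have : x = 0 := by
    have := congrArg (WithLp.equiv 2 (Fin d → ℝ)).symm hv
    rwa [Equiv.symm_apply_apply] at this
  rw [this, norm_zero] at hx1
  norm_num at hx1
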